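/- Let A be a finite poset and let a ∈ A be a linear point with witness a↑. Let r_{a↑} : A → A∖{a} be the map sending every b ≠ a to itself and a to a↑, and let i : A∖{a} → A be the inclusion. Then r_{a↑} is order-preserving, r_{a↑} ∘ i = id, and i ∘ r_{a↑} is homotopic to the identity of X_A; that is, A∖{a} is a deformation retract of A. -/
import Mathlib

open Topology

theorem stmt3 {A : Type*} [PartialOrder A] [Fintype A] (a aUp : A)
    (h1 : a < aUp) (h2 : ∀ b : A, a < b → aUp ≤ b)
    (r : A → {b : A // b ≠ a})
    (hrne : ∀ (b : A) (hb : b ≠ a), r b = ⟨b, hb⟩)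
    (hra : r a = ⟨aUp, h1.ne'⟩) :
    ∃ hmono : Monotone r,
      (∀ b : {b : A // b ≠ a}, r (b : A) = b) ∧
        ContinuousMap.Homotopic
          (WithLowerSet.map ⟨fun b : A => ((r b : A)), fun _ _ h => hmono h⟩)
          (ContinuousMap.id (WithLowerSet A)) := by
  classical
  have hle : ∀ b : A, b ≤ (r b : A) := by
    intro b
    by_cases hb : b = a
    · subst hb; rw [hra]; exact h1.le
    · rw [hrne b hb]
  have hmono : Monotone r := by
    intro b c hbc
    show (r b : A) ≤ (r c : A)
    by_cases hb : b = a <;> by_cases hc : c = a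
    · subst hb; subst hc; exact le_rfl
    · subst hb
      rw [hra, hrne c hc]
      exact h2 c (lt_of_le_of_ne hbc (Ne.symm hc))
    · subst hc
      rw [hrne b hb, hra]
      exact le_trans hbc h1.le
    · rw [hrne b hb, hrne c hc]; exact hbc
  refine ⟨hmono, fun b => ?_, ?_⟩
  · exact hrne b.val b.prop
  · set F : C(WithLowerSet A, WithLowerSet A) :=
      WithLowerSet.map ⟨fun b : A => ((r b : A)), fun _ _ h => hmono h⟩ with hF
    refine ⟨⟨⟨fun p => if p.1 = 0 then F p.2 else p.2, ?_⟩, ?_, ?_⟩⟩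
    · -- continuity
      rw [continuous_def]
      intro U hU
      have hU' : IsLowerSet U := Topology.IsLowerSet.isOpen_iff_isLowerSet.mp hU
      have hset : (fun p : unitInterval × WithLowerSet A =>
          if p.1 = 0 then F p.2 else p.2) ⁻¹' U
          = ((Set.univ : Set unitInterval) ×ˢ (F ⁻¹' U)) ∪
            ({t : unitInterval | t ≠ 0} ×ˢ U) := by
        ext ⟨t, x⟩
        simp only [Set.mem_preimage, Set.mem_union, Set.mem_prod, Set.mem_univ, true_and,
          Set.mem_setOf_eq]
        by_cases ht : t = 0
        · subst ht
          simp
        · simp only [if_neg ht, ne_eq, ht, not_false_eq_true, true_and]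
          constructor
          · intro hx; exact Or.inr hx
          · rintro (hx | hx)
            · exact hU' (hle x) hx
            · exact hx
      rw [hset]
      exact (isOpen_univ.prod (F.continuous.isOpen_preimage U hU)).union
        (isOpen_ne.prod hU)
    · intro x; simp
    · intro x
      simp only [if_neg (by norm_num : (1 : unitInterval) ≠ 0)]
      rfl
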